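/- Let H(s) = C(sE − A)⁻¹B + D and let H_r be the Petrov-Galerkin reduced model built from V, W ∈ ℂⁿˣʳ. Fix σ ∈ ℂ with σE − A and σE_r − A_r invertible and a nonzero direction r ∈ ℂᵐ. If for all j = 1, …, N the vectors ((σE − A)⁻¹E)^{j−1}(σE − A)⁻¹Br lie in the column space of V, then H^{(k)}(σ)r = H_r^{(k)}(σ)r for k = 0, 1, …, N−1, where H^{(k)} denotes the k-th derivative with respect to s, and H^{(k)}(σ) = (−1)^k k! · C((σE−A)⁻¹E)^k(σE−A)⁻¹B for k ≥ 1. -/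
import Mathlib


open Matrix
open scoped Matrix

/-- The `k`-th derivative of `s ↦ C (sE - A)⁻¹ B + D` at `σ`:
`H⁽⁰⁾(σ) = C (σE-A)⁻¹ B + D` and for `k ≥ 1`,
`H⁽ᵏ⁾(σ) = (-1)^k k! · C ((σE-A)⁻¹E)^k (σE-A)⁻¹ B`. -/
noncomputable def transferDeriv {n m p : ℕ}
    (E A : Matrix (Fin n) (Fin n) ℂ) (B : Matrix (Fin n) (Fin m) ℂ)
    (C : Matrix (Fin p) (Fin n) ℂ) (D : Matrix (Fin p) (Fin m) ℂ)
    (σ : ℂ) (k : ℕ) : Matrix (Fin p) (Fin m) ℂ :=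
  if k = 0 then C * (σ • E - A)⁻¹ * B + D
  else ((-1 : ℂ) ^ k * (k.factorial : ℂ)) •
    (C * ((σ • E - A)⁻¹ * E) ^ k * (σ • E - A)⁻¹ * B)

/-- Higher-order right tangential Hermite interpolation: if the vectors
`((σE-A)⁻¹E)^{j-1} (σE-A)⁻¹ B r` for `j = 1, …, N` lie in the column space of `V`,
then `H⁽ᵏ⁾(σ) r = H_r⁽ᵏ⁾(σ) r` for `k = 0, 1, …, N-1`. -/
theorem higher_order_right_tangential_interpolation
    {n m p r : ℕ} (N : ℕ)
    (E A : Matrix (Fin n) (Fin n) ℂ) (B : Matrix (Fin n) (Fin m) ℂ)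
    (C : Matrix (Fin p) (Fin n) ℂ) (D : Matrix (Fin p) (Fin m) ℂ)
    (V W : Matrix (Fin n) (Fin r) ℂ)
    (σ : ℂ)
    (hσ : IsUnit (σ • E - A).det)
    (hσr : IsUnit (σ • (Wᵀ * E * V) - Wᵀ * A * V).det)
    (rdir : Fin m → ℂ) (hrdir : rdir ≠ 0)
    (hran : ∀ j : ℕ, 1 ≤ j → j ≤ N →
      ∃ c : Fin r → ℂ,
        V *ᵥ c = (((σ • E - A)⁻¹ * E) ^ (j - 1) * (σ • E - A)⁻¹ * B) *ᵥ rdir) :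
    ∀ k : ℕ, k < N →
      (transferDeriv E A B C D σ k) *ᵥ rdir
        = (transferDeriv (Wᵀ * E * V) (Wᵀ * A * V) (Wᵀ * B) (C * V) D σ k) *ᵥ rdir := by
  set K : Matrix (Fin n) (Fin n) ℂ := σ • E - A with hKdef
  set Er : Matrix (Fin r) (Fin r) ℂ := Wᵀ * E * V with hErdef
  set Br : Matrix (Fin r) (Fin m) ℂ := Wᵀ * B with hBrdef
  set Kr : Matrix (Fin r) (Fin r) ℂ := σ • Er - Wᵀ * A * V with hKrdef
  have hK1 : K * K⁻¹ = 1 := mul_nonsing_inv K hσ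
  have hK2 : K⁻¹ * K = 1 := nonsing_inv_mul K hσ
  have hKr1 : Kr * Kr⁻¹ = 1 := mul_nonsing_inv Kr hσr
  have hKr2 : Kr⁻¹ * Kr = 1 := nonsing_inv_mul Kr hσr
  have hWKV : Wᵀ * K * V = Kr := by
    simp [hKdef, hKrdef, hErdef, Matrix.mul_sub, Matrix.sub_mul, Matrix.mul_smul,
      Matrix.smul_mul, Matrix.mul_assoc]
  have hcancel : Wᵀ * K * K⁻¹ = Wᵀ := by
    rw [Matrix.mul_assoc, hK1, Matrix.mul_one]
  -- the moment vectors
  set f : ℕ → (Fin n → ℂ) := fun j => ((K⁻¹ * E) ^ j * (K⁻¹ * B)) *ᵥ rdir with hfdef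
  set g : ℕ → (Fin r → ℂ) := fun j => ((Kr⁻¹ * Er) ^ j * (Kr⁻¹ * Br)) *ᵥ rdir with hgdef
  have hfsucc : ∀ j, f (j + 1) = K⁻¹ *ᵥ (E *ᵥ f j) := by
    intro j
    simp only [hfdef, pow_succ', Matrix.mulVec_mulVec, Matrix.mul_assoc]
  have hgsucc : ∀ j, g (j + 1) = Kr⁻¹ *ᵥ (Er *ᵥ g j) := by
    intro j
    simp only [hgdef, pow_succ', Matrix.mulVec_mulVec, Matrix.mul_assoc]
  have hinj : ∀ x y : Fin r → ℂ, Kr *ᵥ x = Kr *ᵥ y → x = y := by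
    intro x y h
    have h2 := congrArg (fun v => Kr⁻¹ *ᵥ v) h
    simpa [Matrix.mulVec_mulVec, hKr2] using h2
  have key : ∀ j, j < N → V *ᵥ g j = f j := by
    intro j
    induction j with
    | zero =>
      intro hj
      obtain ⟨c, hc⟩ := hran 1 le_rfl (by omega)
      have hcf : V *ᵥ c = f 0 := by
        simpa [hfdef, Matrix.mul_assoc] using hc
      have hKrg : Kr *ᵥ g 0 = Br *ᵥ rdir := by
        simp only [hgdef, pow_zero, one_mul, Matrix.mulVec_mulVec,
          ← Matrix.mul_assoc, hKr1]
        simp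
      have hKrc : Kr *ᵥ c = Br *ᵥ rdir := by
        calc Kr *ᵥ c = (Wᵀ * K) *ᵥ (V *ᵥ c) := by
              rw [← hWKV, Matrix.mulVec_mulVec]
          _ = (Wᵀ * K) *ᵥ ((K⁻¹ * B) *ᵥ rdir) := by
              rw [hcf]; simp [hfdef]
          _ = Br *ᵥ rdir := by
              simp [Matrix.mulVec_mulVec, ← Matrix.mul_assoc, hcancel, hBrdef]
      have : g 0 = c := hinj _ _ (by rw [hKrg, hKrc])
      rw [this, hcf]
    | succ j ih =>
      intro hj
      have hVg : V *ᵥ g j = f j := ih (by omega)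
      obtain ⟨c, hc⟩ := hran (j + 2) (by omega) (by omega)
      have hcf : V *ᵥ c = f (j + 1) := by
        simpa [hfdef, Matrix.mul_assoc] using hc
      have hKrg : Kr *ᵥ g (j + 1) = (Wᵀ * E) *ᵥ f j := by
        rw [hgsucc, ← hVg]
        simp [Matrix.mulVec_mulVec, ← Matrix.mul_assoc, hKr1, hErdef]
      have hKrc : Kr *ᵥ c = (Wᵀ * E) *ᵥ f j := by
        calc Kr *ᵥ c = (Wᵀ * K) *ᵥ (V *ᵥ c) := by
              rw [← hWKV, Matrix.mulVec_mulVec]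
          _ = (Wᵀ * K) *ᵥ (K⁻¹ *ᵥ (E *ᵥ f j)) := by rw [hcf, hfsucc]
          _ = (Wᵀ * E) *ᵥ f j := by
              simp [Matrix.mulVec_mulVec, ← Matrix.mul_assoc, hcancel]
      have : g (j + 1) = c := hinj _ _ (by rw [hKrg, hKrc])
      rw [this, hcf]
  intro k hk
  by_cases hk0 : k = 0
  · subst hk0
    have h0 := key 0 hk
    simp only [transferDeriv, reduceIte]
    rw [← hKdef, ← hKrdef, Matrix.add_mulVec, Matrix.add_mulVec]
    congr 1
    calc (C * K⁻¹ * B) *ᵥ rdir = C *ᵥ f 0 := by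
          simp [hfdef, Matrix.mulVec_mulVec, Matrix.mul_assoc]
      _ = C *ᵥ (V *ᵥ g 0) := by rw [h0]
      _ = (C * V * Kr⁻¹ * Br) *ᵥ rdir := by
          simp [hgdef, Matrix.mulVec_mulVec, Matrix.mul_assoc]
  · have hkey := key k hk
    simp only [transferDeriv, if_neg hk0]
    rw [← hKdef, ← hKrdef, Matrix.smul_mulVec, Matrix.smul_mulVec]
    congr 1
    calc (C * (K⁻¹ * E) ^ k * K⁻¹ * B) *ᵥ rdir = C *ᵥ f k := by
          simp [hfdef, Matrix.mulVec_mulVec, Matrix.mul_assoc]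
      _ = C *ᵥ (V *ᵥ g k) := by rw [hkey]
      _ = (C * V * (Kr⁻¹ * Er) ^ k * Kr⁻¹ * Br) *ᵥ rdir := by
          simp [hgdef, Matrix.mulVec_mulVec, Matrix.mul_assoc]
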